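/- arXiv:1009.5426 — 4 statements merged into one kernel-verified Lean document; each statement's English description precedes it below -/
import Mathlib

section
/- For every ρ ∈ (0,1), real x ≥ 0, and μ > 0, one has Σ_{n=1}^{⌊x/μ⌋−1} (1−ρ) ρ^n n ≤ (ρ/(1−ρ)) γ(x,ρ) ≤ Σ_{n=1}^{⌈x/μ⌉+1} (1−ρ) ρ^n n, where γ(x,ρ) = 1 − ρ^{x/μ} − ρ^{x/μ}(1−ρ)x/μ. -/
open Finset Real

private lemma sum_closed_form (ρ : ℝ) (hρ1 : ρ < 1) (N : ℕ) :
    ∑ n ∈ Finset.Icc 1 N, (1 - ρ) * ρ ^ n * (n : ℝ) =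
      ρ / (1 - ρ) * (1 - ρ ^ N - ρ ^ N * (1 - ρ) * N) := by
  have h1 : (1 : ℝ) - ρ ≠ 0 := by linarith
  induction N with
  | zero => simp
  | succ k ih =>
    rw [Finset.sum_Icc_succ_top (by omega), ih]
    push_cast
    field_simp
    ring

private lemma g_mono (ρ : ℝ) (hρ0 : 0 < ρ) (hρ1 : ρ < 1) :
    MonotoneOn (fun t : ℝ =>
      ρ / (1 - ρ) * (1 - Real.exp (t * Real.log ρ) -
        Real.exp (t * Real.log ρ) * (1 - ρ) * t)) (Set.Ici 0) := by
  set c := Real.log ρ with hc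
  have hcle : c ≤ ρ - 1 := by
    have := Real.log_le_sub_one_of_pos hρ0
    linarith
  have hd : ∀ t : ℝ, HasDerivAt (fun t : ℝ =>
      ρ / (1 - ρ) * (1 - Real.exp (t * c) - Real.exp (t * c) * (1 - ρ) * t))
      (ρ / (1 - ρ) * (Real.exp (t * c) * (-c - (1 - ρ) * (c * t + 1)))) t := by
    intro t
    have he : HasDerivAt (fun t : ℝ => Real.exp (t * c)) (Real.exp (t * c) * c) t := by
      simpa using (((hasDerivAt_id t).mul_const c).exp)
    have h2 : HasDerivAt (fun t : ℝ => Real.exp (t * c) * (1 - ρ) * t)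
        ((Real.exp (t * c) * c) * (1 - ρ) * t + Real.exp (t * c) * (1 - ρ)) t := by
      convert (he.mul_const (1 - ρ)).mul (hasDerivAt_id' t) using 1 <;> first | rfl | (funext y; simp only [Pi.mul_apply]) | ring
    have h3 : HasDerivAt (fun t : ℝ =>
        1 - Real.exp (t * c) - Real.exp (t * c) * (1 - ρ) * t)
        (-(Real.exp (t * c) * c) - ((Real.exp (t * c) * c) * (1 - ρ) * t
          + Real.exp (t * c) * (1 - ρ))) t := by convert ((hasDerivAt_const t 1).sub he).sub h2 using 1 <;> first | rfl | (funext y; simp only [Pi.sub_apply]) | ring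
    have := h3.const_mul (ρ / (1 - ρ))
    convert this using 1 <;> first | rfl | (funext y; simp only [Pi.mul_apply]) | ring
  apply monotoneOn_of_deriv_nonneg (convex_Ici 0)
  · exact Continuous.continuousOn (by fun_prop)
  · intro t _
    exact (hd t).differentiableAt.differentiableWithinAt
  · intro t ht
    rw [interior_Ici] at ht
    rw [(hd t).deriv]
    have ht0 : (0:ℝ) ≤ t := le_of_lt ht
    have h1 : 0 < ρ / (1 - ρ) := div_pos hρ0 (by linarith)
    have h2 : 0 < Real.exp (t * c) := Real.exp_pos _
    have hclt : c < 0 := by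
      rw [hc]
      exact Real.log_neg hρ0 hρ1
    have h3 : (0:ℝ) ≤ -c - (1 - ρ) * (c * t + 1) := by nlinarith [mul_nonneg (by linarith : (0:ℝ) ≤ 1 - ρ) (mul_nonneg (by linarith : (0:ℝ) ≤ -c) ht0)]
    positivity

/-- for `ρ ∈ (0,1)`, `μ > 0` and `x ≥ 0`, with
`γ(x,ρ) = 1 - ρ^{x/μ} - ρ^{x/μ}(1-ρ)x/μ` (where `ρ^{x/μ} = exp((x/μ) log ρ)`),
`Σ_{n=1}^{⌊x/μ⌋-1} (1-ρ)ρ^n n ≤ (ρ/(1-ρ)) γ(x,ρ) ≤ Σ_{n=1}^{⌈x/μ⌉+1} (1-ρ)ρ^n n`. -/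
theorem stmt_3 (ρ μ x : ℝ) (hρ : ρ ∈ Set.Ioo (0 : ℝ) 1) (hμ : 0 < μ) (hx : 0 ≤ x) :
    (∑ n ∈ Finset.Icc 1 (⌊x / μ⌋ - 1).toNat, (1 - ρ) * ρ ^ n * (n : ℝ)) ≤
      (ρ / (1 - ρ)) *
        (1 - ρ ^ (x / μ) - ρ ^ (x / μ) * (1 - ρ) * x / μ) ∧
    (ρ / (1 - ρ)) * (1 - ρ ^ (x / μ) - ρ ^ (x / μ) * (1 - ρ) * x / μ) ≤
      ∑ n ∈ Finset.Icc 1 ((⌈x / μ⌉.toNat) + 1), (1 - ρ) * ρ ^ n * (n : ℝ) := by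
  obtain ⟨hρ0, hρ1⟩ := hρ
  set t := x / μ with htdef
  have ht : 0 ≤ t := div_nonneg hx hμ.le
  set c := Real.log ρ with hc
  set g : ℝ → ℝ := fun t =>
    ρ / (1 - ρ) * (1 - Real.exp (t * c) - Real.exp (t * c) * (1 - ρ) * t) with hg
  have hrw : (ρ / (1 - ρ)) * (1 - ρ ^ t - ρ ^ t * (1 - ρ) * x / μ) = g t := by
    have h1 : ρ ^ t = Real.exp (t * c) := by
      rw [Real.rpow_def_of_pos hρ0, mul_comm]
    rw [hg, h1, htdef]
    ring
  have hgN : ∀ N : ℕ, g N = ∑ n ∈ Finset.Icc 1 N, (1 - ρ) * ρ ^ n * (n : ℝ) := by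
    intro N
    rw [sum_closed_form ρ hρ1, hg]
    have h1 : Real.exp ((N : ℝ) * c) = ρ ^ N := by
      rw [hc, Real.exp_nat_mul, Real.exp_log hρ0]
    simp [h1]
  have hmono := g_mono ρ hρ0 hρ1
  constructor
  · rw [hrw, ← hgN]
    have hle : ((⌊t⌋ - 1).toNat : ℝ) ≤ t := by
      have h1 : (0:ℤ) ≤ ⌊t⌋ := Int.floor_nonneg.mpr ht
      have h2 : ((⌊t⌋ - 1).toNat : ℤ) ≤ ⌊t⌋ := by omega
      have h3 : (((⌊t⌋ - 1).toNat : ℤ) : ℝ) ≤ (⌊t⌋ : ℝ) := by exact_mod_cast h2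
      have := Int.floor_le t
      push_cast at h3 ⊢
      linarith
    exact hmono (Set.mem_Ici.mpr (by positivity)) (Set.mem_Ici.mpr ht) hle
  · rw [hrw, ← hgN]
    have hle : t ≤ ((⌈t⌉.toNat + 1 : ℕ) : ℝ) := by
      have h1 : (0:ℤ) ≤ ⌈t⌉ := Int.ceil_nonneg ht
      have h2 : (⌈t⌉ : ℤ) ≤ (⌈t⌉.toNat + 1 : ℕ) := by omega
      have h3 : ((⌈t⌉ : ℤ) : ℝ) ≤ ((⌈t⌉.toNat + 1 : ℕ) : ℝ) := by exact_mod_cast h2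
      have := Int.le_ceil t
      linarith
    exact hmono (Set.mem_Ici.mpr ht) (Set.mem_Ici.mpr (by positivity)) hle
end

section
/- For ρ ∈ (0,1), μ > 0, and η = 1/4: sup_{0<x<(1−ρ)^{−1/4}} (ρ/(1−ρ)) (1 − ρ^{x/μ} − (1−ρ)(x/μ)ρ^{x/μ}) → 0 as ρ ↑ 1; more precisely this supremum is O((1−ρ)^{1/2}). -/
open Filter Real

lemma stmt12_key (μ : ℝ) (hμ : 0 < μ) (ρ : ℝ) (hρ0 : 1/2 < ρ) (hρ1 : ρ < 1)
    (x : ℝ) (hx : 0 < x) (hx2 : x < (1 - ρ) ^ (-(1/4 : ℝ))) :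
    (ρ / (1 - ρ)) * (1 - ρ ^ (x / μ) - (1 - ρ) * (x / μ) * ρ ^ (x / μ)) ≤
      (2 * (1/μ^2 + 1/μ)) * (1 - ρ) ^ ((1:ℝ)/2) := by
  have hρpos : (0:ℝ) < ρ := by linarith
  have hδ : (0:ℝ) < 1 - ρ := by linarith
  have hδ1 : 1 - ρ < 1 := by linarith
  set t := x / μ with ht
  have ht0 : 0 < t := div_pos hx hμ
  set A := (1 - ρ) ^ (-(1/4 : ℝ)) with hA
  have hApos : 0 < A := Real.rpow_pos_of_pos hδ _
  set p := ρ ^ t with hp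
  have hppos : 0 < p := Real.rpow_pos_of_pos hρpos _
  -- log bound
  have hlog : -Real.log ρ ≤ (1 - ρ)/ρ := by
    have h := Real.log_le_sub_one_of_pos (show (0:ℝ) < 1/ρ by positivity)
    rw [one_div, Real.log_inv] at h
    have heq : (1-ρ)/ρ = ρ⁻¹ - 1 := by
      rw [sub_div, div_self hρpos.ne', one_div]
    linarith [heq]
  have hpow : ∀ s : ℝ, 1 - ρ ^ s ≤ s * (-Real.log ρ) := by
    intro s
    have h1 : ρ ^ s = Real.exp (s * Real.log ρ) := by
      rw [Real.rpow_def_of_pos hρpos, mul_comm]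
    have h2 := Real.add_one_le_exp (s * Real.log ρ)
    have h3 : s * (-Real.log ρ) = -(s * Real.log ρ) := by ring
    rw [h1, h3]; linarith
  have h1p : ρ * (1 - p) ≤ t * (1 - ρ) := by
    have ha := hpow t
    have hb : t * (-Real.log ρ) ≤ t * ((1-ρ)/ρ) := mul_le_mul_of_nonneg_left hlog ht0.le
    have hc : ρ * (t * ((1-ρ)/ρ)) = t * (1-ρ) := by field_simp
    nlinarith [ha, hb]
  -- main step 1
  have hE : (ρ / (1 - ρ)) * (1 - p - (1 - ρ) * t * p) ≤ t * (1 - p * ρ) := by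
    rw [div_mul_eq_mul_div, div_le_iff₀ hδ]
    nlinarith [h1p]
  -- bound on 1 - p * ρ
  have hq0 := hpow (t + 1)
  rw [Real.rpow_add_one (ne_of_gt hρpos)] at hq0
  have hq : 1 - p * ρ ≤ 2 * (t + 1) * (1 - ρ) := by
    have h2 : (t+1) * (-Real.log ρ) ≤ (t+1) * ((1-ρ)/ρ) :=
      mul_le_mul_of_nonneg_left hlog (by linarith)
    have hd : (1-ρ)/ρ ≤ 2*(1-ρ) := by
      rw [div_le_iff₀ hρpos]; nlinarith
    have h3 : (t+1) * ((1-ρ)/ρ) ≤ 2 * (t+1) * (1-ρ) := by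
      nlinarith [mul_le_mul_of_nonneg_left hd (show (0:ℝ) ≤ t+1 by linarith)]
    linarith
  have hE2 : t * (1 - p * ρ) ≤ 2 * t * (t + 1) * (1 - ρ) := by
    nlinarith [mul_le_mul_of_nonneg_left hq ht0.le]
  -- rpow algebra
  have hsq : A * A * (1 - ρ) = (1 - ρ) ^ ((1:ℝ)/2) := by
    rw [hA, ← Real.rpow_add hδ, ← Real.rpow_add_one (ne_of_gt hδ)]
    norm_num
  have hT1 : A * (1 - ρ) ≤ (1 - ρ) ^ ((1:ℝ)/2) := by
    have : A * (1 - ρ) = (1 - ρ) ^ ((3:ℝ)/4) := by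
      rw [hA, ← Real.rpow_add_one (ne_of_gt hδ)]
      norm_num
    rw [this]
    exact Real.rpow_le_rpow_of_exponent_ge hδ hδ1.le (by norm_num)
  have htA : t ≤ A / μ := (div_le_div_iff_of_pos_right hμ).mpr hx2.le
  have hE3 : 2 * t * (t + 1) * (1 - ρ) ≤ 2 * (A/μ) * (A/μ + 1) * (1 - ρ) := by
    have hB : (0:ℝ) ≤ A/μ := by positivity
    nlinarith [mul_le_mul_of_nonneg_right (mul_le_mul htA htA ht0.le hB) hδ.le,
      mul_le_mul_of_nonneg_right htA hδ.le]
  have hE4 : 2 * (A/μ) * (A/μ + 1) * (1 - ρ) ≤ (2 * (1/μ^2 + 1/μ)) * (1 - ρ) ^ ((1:ℝ)/2) := by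
    have heq : 2 * (A/μ) * (A/μ + 1) * (1 - ρ)
        = (2/μ^2) * (A * A * (1-ρ)) + (2/μ) * (A * (1-ρ)) := by
      field_simp
    rw [heq, hsq]
    have h5 : (2/μ) * (A * (1-ρ)) ≤ (2/μ) * (1 - ρ) ^ ((1:ℝ)/2) :=
      mul_le_mul_of_nonneg_left hT1 (by positivity)
    have : (2 * (1/μ^2 + 1/μ)) * (1 - ρ) ^ ((1:ℝ)/2)
        = (2/μ^2) * (1 - ρ) ^ ((1:ℝ)/2) + (2/μ) * (1 - ρ) ^ ((1:ℝ)/2) := by ring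
    rw [this]
    linarith
  linarith

/-- for `μ > 0`,
`sup_{0<x<(1-ρ)^{-1/4}} (ρ/(1-ρ)) (1 - ρ^{x/μ} - (1-ρ)(x/μ) ρ^{x/μ}) → 0` as `ρ ↑ 1`;
more precisely this supremum is `O((1-ρ)^{1/2})`. -/
theorem stmt_12 (μ : ℝ) (hμ : 0 < μ) :
    (∃ C : ℝ, 0 < C ∧ ∀ᶠ ρ : ℝ in nhdsWithin 1 (Set.Iio 1),
      ∀ x : ℝ, 0 < x → x < (1 - ρ) ^ (-(1/4 : ℝ)) →
        (ρ / (1 - ρ)) * (1 - ρ ^ (x / μ) - (1 - ρ) * (x / μ) * ρ ^ (x / μ)) ≤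
          C * (1 - ρ) ^ ((1:ℝ)/2)) ∧
    (∀ ε : ℝ, 0 < ε → ∀ᶠ ρ : ℝ in nhdsWithin 1 (Set.Iio 1),
      ∀ x : ℝ, 0 < x → x < (1 - ρ) ^ (-(1/4 : ℝ)) →
        (ρ / (1 - ρ)) * (1 - ρ ^ (x / μ) - (1 - ρ) * (x / μ) * ρ ^ (x / μ)) ≤ ε) := by
  set C : ℝ := 2 * (1/μ^2 + 1/μ) with hC
  have hCpos : 0 < C := by positivity
  have hmem : Set.Ioo (1/2 : ℝ) 1 ∈ nhdsWithin (1:ℝ) (Set.Iio 1) :=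
    Ioo_mem_nhdsLT_of_mem (by norm_num : (1:ℝ) ∈ Set.Ioc (1/2 : ℝ) 1)
  have hmain : ∀ᶠ ρ : ℝ in nhdsWithin 1 (Set.Iio 1),
      ∀ x : ℝ, 0 < x → x < (1 - ρ) ^ (-(1/4 : ℝ)) →
        (ρ / (1 - ρ)) * (1 - ρ ^ (x / μ) - (1 - ρ) * (x / μ) * ρ ^ (x / μ)) ≤
          C * (1 - ρ) ^ ((1:ℝ)/2) := by
    filter_upwards [hmem] with ρ hρ x hx hx2
    exact stmt12_key μ hμ ρ hρ.1 hρ.2 x hx hx2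
  refine ⟨⟨C, hCpos, hmain⟩, ?_⟩
  intro ε hε
  have htend : Tendsto (fun ρ : ℝ => C * (1 - ρ) ^ ((1:ℝ)/2)) (nhdsWithin 1 (Set.Iio 1)) (nhds 0) := by
    have hc : ContinuousAt (fun ρ : ℝ => C * (1 - ρ) ^ ((1:ℝ)/2)) 1 := by
      exact continuousAt_const.mul (ContinuousAt.rpow_const (by fun_prop) (Or.inr (by norm_num)))
    have := hc.continuousWithinAt (s := Set.Iio 1)
    have h0 : C * (1 - (1:ℝ)) ^ ((1:ℝ)/2) = 0 := by
      rw [sub_self, Real.zero_rpow (by norm_num : (1:ℝ)/2 ≠ 0), mul_zero]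
    simpa [ContinuousWithinAt, h0] using this
  have hsmall : ∀ᶠ ρ : ℝ in nhdsWithin 1 (Set.Iio 1), C * (1 - ρ) ^ ((1:ℝ)/2) < ε :=
    htend.eventually (gt_mem_nhds hε)
  filter_upwards [hmain, hsmall] with ρ h1 h2 x hx hx2
  exact le_trans (h1 x hx hx2) h2.le
end

section
/- Let α > 2, ε > 0 with α − 1 − ε > 0, μ > 0, γ ∈ (0,1), υ ∈ (0,1). Then sup over t > (x^υ log x)^{−1} of exp(−((x − x^γ)/μ − 1)t + log t + (υ + α − 1 + ε) log x) equals exp(−(x^{1−υ}/(μ log x))(1 − x^{γ−1} − μ/x) − log log x + (α−1+ε) log x), and this quantity tends to 0 as x → ∞. -/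
open Filter Real

/-- for `α > 2`, `ε > 0` with `α - 1 - ε > 0`, `μ > 0`, `γ, υ ∈ (0,1)`:
eventually in `x`, the supremum over `t > (x^υ log x)⁻¹` of
`exp(-((x - x^γ)/μ - 1) t + log t + (υ + α - 1 + ε) log x)` equals
`exp(-(x^{1-υ}/(μ log x))(1 - x^{γ-1} - μ/x) - log log x + (α-1+ε) log x)`,
and this quantity tends to `0` as `x → ∞`. -/
theorem stmt_14 (α ε μ γ υ : ℝ) (hα : 2 < α) (hε : 0 < ε) (hαε : 0 < α - 1 - ε)
    (hμ : 0 < μ) (hγ : γ ∈ Set.Ioo (0 : ℝ) 1) (hυ : υ ∈ Set.Ioo (0 : ℝ) 1) :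
    (∀ᶠ x : ℝ in atTop,
      IsLUB {y : ℝ | ∃ t : ℝ, (x ^ υ * Real.log x)⁻¹ < t ∧
          y = Real.exp (-((x - x ^ γ) / μ - 1) * t + Real.log t +
                (υ + α - 1 + ε) * Real.log x)}
        (Real.exp (-(x ^ (1 - υ) / (μ * Real.log x)) * (1 - x ^ (γ - 1) - μ / x) -
            Real.log (Real.log x) + (α - 1 + ε) * Real.log x))) ∧
    Tendsto (fun x : ℝ =>
        Real.exp (-(x ^ (1 - υ) / (μ * Real.log x)) * (1 - x ^ (γ - 1) - μ / x) -
          Real.log (Real.log x) + (α - 1 + ε) * Real.log x)) atTop (nhds 0) := by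
  obtain ⟨hγ0, hγ1⟩ := hγ
  obtain ⟨hυ0, hυ1⟩ := hυ
  have h1υ : (0:ℝ) < 1 - υ := by linarith
  -- basic tendsto facts
  have hr1 : Tendsto (fun x : ℝ => x ^ (γ - 1)) atTop (nhds 0) := by
    have := tendsto_rpow_neg_atTop (show (0:ℝ) < 1 - γ by linarith)
    simpa [neg_sub] using this
  have hr2 : Tendsto (fun x : ℝ => μ / x) atTop (nhds 0) :=
    Tendsto.div_atTop tendsto_const_nhds tendsto_id
  have hr3 : Tendsto (fun x : ℝ => Real.log x / x ^ (1 - υ)) atTop (nhds 0) :=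
    (isLittleO_log_rpow_atTop h1υ).tendsto_div_nhds_zero
  have hx1 : ∀ᶠ x : ℝ in atTop, (1:ℝ) < x := eventually_gt_atTop 1
  have hlog1 : ∀ᶠ x : ℝ in atTop, (1:ℝ) ≤ Real.log x :=
    tendsto_log_atTop.eventually_ge_atTop 1
  -- key inequality for the LUB part
  have hsum : Tendsto (fun x : ℝ => x ^ (γ-1) + μ / x + μ * (Real.log x / x ^ (1-υ)))
      atTop (nhds 0) := by
    have := (hr1.add hr2).add (hr3.const_mul μ)
    simpa using this
  have hkey : ∀ᶠ x : ℝ in atTop, x ^ γ + μ + μ * (x ^ υ * Real.log x) < x := by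
    filter_upwards [hsum.eventually_lt_const one_pos, hx1] with x hs hx
    have hx0 : (0:ℝ) < x := by linarith
    have e1 : x ^ (γ-1) * x = x ^ γ := by
      rw [← Real.rpow_add_one hx0.ne' (γ-1)]; norm_num
    have e2 : x ^ υ * x ^ (1-υ) = x := by
      rw [← Real.rpow_add hx0]; norm_num
    have hne : x ^ (1-υ) ≠ 0 := (Real.rpow_pos_of_pos hx0 _).ne'
    have e3 : Real.log x / x ^ (1-υ) * x = x ^ υ * Real.log x := by
      rw [div_mul_eq_mul_div, div_eq_iff hne]
      linear_combination (-Real.log x) * e2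
    have hmul := mul_lt_mul_of_pos_right hs hx0
    rw [one_mul] at hmul
    calc x ^ γ + μ + μ * (x ^ υ * Real.log x)
        = (x ^ (γ-1) + μ / x + μ * (Real.log x / x ^ (1-υ))) * x := by
          rw [add_mul, add_mul, e1, div_mul_cancel₀ μ hx0.ne', mul_assoc, e3]
      _ < x := hmul
  constructor
  · -- LUB part
    filter_upwards [hx1, hkey] with x hx hk
    have hx0 : (0:ℝ) < x := by linarith
    have hL : (0:ℝ) < Real.log x := Real.log_pos hx
    have hX : (0:ℝ) < x ^ υ := Real.rpow_pos_of_pos hx0 _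
    have e1 : x ^ (γ-1) * x = x ^ γ := by
      rw [← Real.rpow_add_one hx0.ne' (γ-1)]; norm_num
    have e2 : x ^ υ * x ^ (1-υ) = x := by
      rw [← Real.rpow_add hx0]; norm_num
    have eY : x ^ (1-υ) = x / x ^ υ := by
      rw [eq_div_iff hX.ne']; linear_combination e2
    have eH : x ^ (γ-1) = x ^ γ / x := by
      rw [eq_div_iff hx0.ne']; exact e1
    set u : ℝ := x ^ υ * Real.log x with hu_def
    have hu : (0:ℝ) < u := mul_pos hX hL
    set c : ℝ := (x - x ^ γ) / μ - 1 with hc_def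
    have hcu : u < c := by
      rw [hc_def, lt_sub_iff_add_lt, lt_div_iff₀ hμ]
      nlinarith [hk]
    set b : ℝ := (υ + α - 1 + ε) * Real.log x with hb_def
    have ht0 : (0:ℝ) < u⁻¹ := inv_pos.2 hu
    have hlogu : Real.log u⁻¹ = -(υ * Real.log x + Real.log (Real.log x)) := by
      rw [Real.log_inv, hu_def, Real.log_mul hX.ne' hL.ne', Real.log_rpow hx0]
    have key : x ^ (1 - υ) / (μ * Real.log x) * (1 - x ^ (γ - 1) - μ / x) = c * u⁻¹ := by
      rw [eY, eH, hc_def, hu_def]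
      field_simp
    have heq : -(x ^ (1 - υ) / (μ * Real.log x)) * (1 - x ^ (γ - 1) - μ / x) -
        Real.log (Real.log x) + (α - 1 + ε) * Real.log x
        = -c * u⁻¹ + Real.log u⁻¹ + b := by
      rw [hlogu, hb_def, neg_mul, key, ← neg_mul]
      ring
    rw [heq]
    constructor
    · rintro y ⟨t, ht, rfl⟩
      apply Real.exp_le_exp.2
      have ht0' : (0:ℝ) < t := lt_trans ht0 ht
      have hdiv : (0:ℝ) < t / u⁻¹ := div_pos ht0' ht0
      have hlog : Real.log t - Real.log u⁻¹ ≤ (t - u⁻¹) * u := by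
        have h := Real.log_le_sub_one_of_pos hdiv
        rw [Real.log_div ht0'.ne' ht0.ne'] at h
        have e : t / u⁻¹ - 1 = (t - u⁻¹) * u := by field_simp
        linarith [h, e]
      nlinarith [hlog, mul_le_mul_of_nonneg_right hcu.le (sub_nonneg.2 ht.le)]
    · intro y hy
      have hcont : ContinuousAt (fun t : ℝ => Real.exp (-c * t + Real.log t + b)) u⁻¹ := by
        apply Real.continuous_exp.continuousAt.comp
        exact ((continuousAt_const.mul continuousAt_id).add
          (Real.continuousAt_log ht0.ne')).add continuousAt_const
      have htend : Tendsto (fun t : ℝ => Real.exp (-c * t + Real.log t + b))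
          (nhdsWithin u⁻¹ (Set.Ioi u⁻¹)) (nhds (Real.exp (-c * u⁻¹ + Real.log u⁻¹ + b))) :=
        hcont.tendsto.mono_left nhdsWithin_le_nhds
      refine le_of_tendsto htend ?_
      filter_upwards [self_mem_nhdsWithin] with t ht
      exact hy ⟨t, ht, rfl⟩
  · -- tendsto 0 part
    have hq : Tendsto (fun x : ℝ => (2 * μ * Real.log x ^ 2) / x ^ (1-υ)) atTop (nhds 0) := by
      have ho : (fun x : ℝ => Real.log x ^ (2:ℝ)) =o[atTop] fun x : ℝ => x ^ (1-υ) :=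
        isLittleO_log_rpow_rpow_atTop 2 h1υ
      have h2 := (ho.const_mul_left (2*μ)).tendsto_div_nhds_zero
      refine h2.congr fun x => ?_
      have : Real.log x ^ (2:ℝ) = Real.log x ^ 2 := by
        rw [← Real.rpow_natCast (Real.log x) 2]; norm_num
      rw [this]
    have hqinv : Tendsto (fun x : ℝ => x ^ (1-υ) / (2 * μ * Real.log x ^ 2)) atTop atTop := by
      have hpos : ∀ᶠ x : ℝ in atTop, (2 * μ * Real.log x ^ 2) / x ^ (1-υ) ∈ Set.Ioi (0:ℝ) := by
        filter_upwards [hx1, hlog1] with x hx hl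
        have hx0 : (0:ℝ) < x := by linarith
        have hL : (0:ℝ) < Real.log x := by linarith
        have : (0:ℝ) < (2 * μ * Real.log x ^ 2) / x ^ (1-υ) := by positivity
        exact this
      have h3 := tendsto_inv_nhdsGT_zero.comp
        (tendsto_nhdsWithin_of_tendsto_nhds_of_eventually_within _ hq hpos)
      refine h3.congr fun x => ?_
      simp [Function.comp, inv_div]
    have hh : Tendsto (fun x : ℝ => (α - 1 + ε) * Real.log x -
        x ^ (1-υ) / (2 * μ * Real.log x)) atTop atBot := by
      have hneg : Tendsto (fun x : ℝ =>
          (α - 1 + ε) + -(x ^ (1-υ) / (2 * μ * Real.log x ^ 2))) atTop atBot :=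
        tendsto_atBot_add_const_left atTop _ (tendsto_neg_atTop_atBot.comp hqinv)
      have hfac : Tendsto (fun x : ℝ => Real.log x *
          ((α - 1 + ε) + -(x ^ (1-υ) / (2 * μ * Real.log x ^ 2)))) atTop atBot :=
        Tendsto.atTop_mul_atBot₀ tendsto_log_atTop hneg
      refine hfac.congr' ?_
      filter_upwards [hlog1] with x hl
      have hL : (0:ℝ) < Real.log x := by linarith
      field_simp
      ring
    have hE : Tendsto (fun x : ℝ =>
        -(x ^ (1 - υ) / (μ * Real.log x)) * (1 - x ^ (γ - 1) - μ / x) -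
          Real.log (Real.log x) + (α - 1 + ε) * Real.log x) atTop atBot := by
      apply tendsto_atBot_mono' atTop _ hh
      filter_upwards [hx1, hlog1,
        hr1.eventually_lt_const (show (0:ℝ) < 1/4 by norm_num),
        hr2.eventually_lt_const (show (0:ℝ) < 1/4 by norm_num)] with x hx hl h14 h24
      have hx0 : (0:ℝ) < x := by linarith
      have hL : (0:ℝ) < Real.log x := by linarith
      have hY : (0:ℝ) < x ^ (1-υ) := Real.rpow_pos_of_pos hx0 _
      have hA : (0:ℝ) ≤ x ^ (1-υ) / (μ * Real.log x) :=
        (div_pos hY (by positivity)).le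
      have hB : (1:ℝ)/2 ≤ 1 - x ^ (γ-1) - μ / x := by linarith
      have hLL : (0:ℝ) ≤ Real.log (Real.log x) := Real.log_nonneg hl
      have hmain : x ^ (1-υ) / (2 * μ * Real.log x) ≤
          (x ^ (1-υ) / (μ * Real.log x)) * (1 - x ^ (γ-1) - μ / x) := by
        have e : x ^ (1-υ) / (2 * μ * Real.log x) = (x ^ (1-υ) / (μ * Real.log x)) * (1/2) := by
          ring
        rw [e]
        exact mul_le_mul_of_nonneg_left (by linarith) hA
      linarith
    exact Real.tendsto_exp_atBot.comp hE
end

section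
/- Let L be slowly varying and α > 2, and let F̄(x) = x^{−(α−1)} L(x) = P(X_1 > x). Fix ε ∈ (0,1) and set N(x) = ⌊(1−ε)x/μ⌋ with μ > 0. Then for all large x and all 1 ≤ n ≤ N(x): P(X_1 > x−(n−1)μ)/P(X_1 > x) − 1 ≤ C((n−1)/x + φ(x)) where φ(x) = sup_{ε ≤ t ≤ 1} L(tx)/L(x) − 1 → 0 as x → ∞ and C depends only on α, ε, μ. -/
open Filter Real

/-- let `F̄(x) = x^{-(α-1)} L(x)` with `L` slowly varying (with the uniform
convergence `L(tx)/L(x) → 1` on `t ∈ [ε,1]`), `α > 2`, `μ > 0`, `ε ∈ (0,1)` and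
`N(x) = ⌊(1-ε)x/μ⌋`. With `φ(x) = sup_{ε ≤ t ≤ 1} L(tx)/L(x) - 1`, one has `φ(x) → 0`
and there is `C > 0` (depending only on `α, ε, μ`) with, for all large `x` and all
`1 ≤ n ≤ N(x)`, `F̄(x-(n-1)μ)/F̄(x) - 1 ≤ C ((n-1)/x + φ(x))`. -/
theorem stmt_15 (α ε μ : ℝ) (L F : ℝ → ℝ) (hα : 2 < α) (hε : ε ∈ Set.Ioo (0 : ℝ) 1)
    (hμ : 0 < μ)
    (hLpos : ∀ x : ℝ, 0 < x → 0 < L x)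
    (hF : ∀ x : ℝ, 0 < x → F x = x ^ (-(α - 1)) * L x)
    (hLunif : ∀ δ : ℝ, 0 < δ → ∀ᶠ x : ℝ in atTop,
      ∀ t ∈ Set.Icc ε 1, |L (t * x) / L x - 1| ≤ δ) :
    Tendsto (fun x : ℝ =>
        sSup {r : ℝ | ∃ t ∈ Set.Icc ε 1, r = L (t * x) / L x} - 1) atTop (nhds 0) ∧
    ∃ C : ℝ, 0 < C ∧ ∀ᶠ x : ℝ in atTop, ∀ n : ℕ, 1 ≤ n →
      (n : ℝ) ≤ ⌊(1 - ε) * x / μ⌋ →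
      F (x - ((n : ℝ) - 1) * μ) / F x - 1 ≤
        C * (((n : ℝ) - 1) / x +
          (sSup {r : ℝ | ∃ t ∈ Set.Icc ε 1, r = L (t * x) / L x} - 1)) := by
  obtain ⟨hε0, hε1⟩ := hε
  have hmem1 : ∀ x : ℝ, 0 < x →
      (1 : ℝ) ∈ {r : ℝ | ∃ t ∈ Set.Icc ε 1, r = L (t * x) / L x} := by
    intro x hx
    exact ⟨1, ⟨hε1.le, le_refl 1⟩, by rw [one_mul, div_self (hLpos x hx).ne']⟩
  constructor
  · rw [Metric.tendsto_nhds]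
    intro δ hδ
    filter_upwards [hLunif (δ/2) (by positivity), eventually_gt_atTop (0:ℝ)] with x hx hx0
    have hub : ∀ r ∈ {r : ℝ | ∃ t ∈ Set.Icc ε 1, r = L (t * x) / L x}, r ≤ 1 + δ/2 := by
      rintro r ⟨t, ht, rfl⟩
      have := abs_le.mp (hx t ht)
      linarith [this.2]
    have h1 : sSup {r : ℝ | ∃ t ∈ Set.Icc ε 1, r = L (t * x) / L x} ≤ 1 + δ/2 :=
      csSup_le ⟨1, hmem1 x hx0⟩ hub
    have h2 : (1:ℝ) ≤ sSup {r : ℝ | ∃ t ∈ Set.Icc ε 1, r = L (t * x) / L x} :=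
      le_csSup ⟨1 + δ/2, hub⟩ (hmem1 x hx0)
    rw [Real.dist_eq, sub_zero]
    rw [abs_lt]
    constructor <;> linarith
  · have hα1 : (1:ℝ) ≤ α - 1 := by linarith
    have hεp : (0:ℝ) < ε ^ (α - 1) := rpow_pos_of_pos hε0 _
    set K : ℝ := (α - 1) / ε ^ (α - 1) with hK
    have hKpos : 0 < K := by positivity
    refine ⟨K * μ + 1 / ε ^ (α - 1), by positivity, ?_⟩
    filter_upwards [hLunif 1 one_pos, eventually_gt_atTop (0:ℝ)] with x hx hx0
    intro n hn hnN
    set S := {r : ℝ | ∃ t ∈ Set.Icc ε 1, r = L (t * x) / L x} with hSdef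
    have hub : ∀ r ∈ S, r ≤ 2 := by
      rintro r ⟨t, ht, rfl⟩
      have := abs_le.mp (hx t ht)
      linarith [this.2]
    have hBdd : BddAbove S := ⟨2, hub⟩
    have hφ0 : (0:ℝ) ≤ sSup S - 1 := by
      have := le_csSup hBdd (hmem1 x hx0)
      linarith
    -- n ≤ (1-ε)x/μ
    have hnle : (n:ℝ) ≤ (1 - ε) * x / μ := le_trans hnN (Int.floor_le _)
    have hnμ : (n:ℝ) * μ ≤ (1 - ε) * x := by
      rw [div_eq_mul_inv] at hnle
      calc (n:ℝ) * μ ≤ ((1 - ε) * x * μ⁻¹) * μ := by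
            exact mul_le_mul_of_nonneg_right hnle hμ.le
        _ = (1 - ε) * x := by field_simp
    have hn1 : (1:ℝ) ≤ (n:ℝ) := by exact_mod_cast hn
    set y : ℝ := x - ((n:ℝ) - 1) * μ with hy
    have hylb : ε * x ≤ y := by nlinarith
    have hyub : y ≤ x := by nlinarith
    have hy0 : 0 < y := lt_of_lt_of_le (by positivity) hylb
    set t : ℝ := y / x with ht
    have htmem : t ∈ Set.Icc ε 1 := by
      constructor
      · rw [le_div_iff₀ hx0]; linarith
      · rw [div_le_one hx0]; exact hyub
    have ht0 : 0 < t := lt_of_lt_of_le hε0 htmem.1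
    have htx : t * x = y := by rw [ht]; exact div_mul_cancel₀ y hx0.ne'
    have hRmem : L y / L x ∈ S := ⟨t, htmem, by rw [htx]⟩
    have hRle : L y / L x ≤ sSup S := le_csSup hBdd hRmem
    -- ratio computation
    have hFy : F y = y ^ (-(α - 1)) * L y := hF y hy0
    have hFx : F x = x ^ (-(α - 1)) * L x := hF x hx0
    have hxp : 0 < x ^ (-(α - 1)) := rpow_pos_of_pos hx0 _
    have hyLp : 0 < L y := hLpos y hy0
    have hxLp : 0 < L x := hLpos x hx0
    have hratio : F y / F x = t ^ (-(α - 1)) * (L y / L x) := by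
      rw [hFy, hFx, ht, Real.div_rpow hy0.le hx0.le, div_mul_div_comm]
    -- bounds on A = t ^ (-(α-1))
    set A : ℝ := t ^ (-(α - 1)) with hA
    have hApos : 0 < A := rpow_pos_of_pos ht0 _
    have hAle : A ≤ ε ^ (-(α - 1)) :=
      rpow_le_rpow_of_nonpos hε0 htmem.1 (by linarith)
    have hεinv : ε ^ (-(α - 1)) = 1 / ε ^ (α - 1) := by
      rw [rpow_neg hε0.le]; exact inv_eq_one_div _
    -- Bernoulli : 1 + (α-1)(t-1) ≤ t^(α-1)
    have hbern : 1 + (α - 1) * (t - 1) ≤ t ^ (α - 1) := by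
      have := one_add_mul_self_le_rpow_one_add (s := t - 1) (by linarith) hα1
      simpa using this
    have htp : ε ^ (α - 1) ≤ t ^ (α - 1) := rpow_le_rpow hε0.le htmem.1 (by linarith)
    have htp0 : 0 < t ^ (α - 1) := rpow_pos_of_pos ht0 _
    have htp1 : t ^ (α - 1) ≤ 1 := rpow_le_one ht0.le htmem.2 (by linarith)
    have hAeq : A = 1 / t ^ (α - 1) := by
      rw [hA, rpow_neg ht0.le]; exact inv_eq_one_div _
    have hA1 : A - 1 ≤ (α - 1) * (1 - t) / ε ^ (α - 1) := by
      have h1 : A - 1 = (1 - t ^ (α - 1)) / t ^ (α - 1) := by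
        rw [hAeq]; field_simp
      rw [h1]
      exact div_le_div₀ (mul_nonneg (by linarith) (by linarith [htmem.2])) (by linarith [hbern]) hεp htp
    have h1t : 1 - t = ((n:ℝ) - 1) * μ / x := by
      rw [ht, hy]; field_simp; ring
    -- combine
    have hAR : A * (L y / L x) - 1 ≤ A * (L y / L x - 1) + (A - 1) := by ring_nf; rfl
    have key : A * (L y / L x - 1) ≤ 1 / ε ^ (α - 1) * (sSup S - 1) := by
      rcases le_or_gt 0 (L y / L x - 1) with h | h
      · calc A * (L y / L x - 1) ≤ ε ^ (-(α - 1)) * (L y / L x - 1) :=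
              mul_le_mul_of_nonneg_right hAle h
          _ ≤ 1 / ε ^ (α - 1) * (sSup S - 1) := by
              rw [hεinv]
              apply mul_le_mul_of_nonneg_left (by linarith) (by positivity)
      · calc A * (L y / L x - 1) ≤ 0 := mul_nonpos_of_nonneg_of_nonpos hApos.le h.le
          _ ≤ _ := by positivity
    have hn1x : 0 ≤ ((n:ℝ) - 1) / x := by
      apply div_nonneg (by linarith) hx0.le
    have hA1' : A - 1 ≤ K * μ * (((n:ℝ) - 1) / x) := by
      calc A - 1 ≤ (α - 1) * (1 - t) / ε ^ (α - 1) := hA1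
        _ = K * μ * (((n:ℝ) - 1) / x) := by
            rw [h1t, hK]; field_simp
    rw [hratio]
    have : A * (L y / L x) - 1 ≤ K * μ * (((n:ℝ) - 1) / x) + 1 / ε ^ (α - 1) * (sSup S - 1) := by
      calc A * (L y / L x) - 1 ≤ A * (L y / L x - 1) + (A - 1) := hAR
        _ ≤ _ := by linarith
    calc A * (L y / L x) - 1 ≤ K * μ * (((n:ℝ) - 1) / x) + 1 / ε ^ (α - 1) * (sSup S - 1) := this
      _ ≤ (K * μ + 1 / ε ^ (α - 1)) * (((n:ℝ) - 1) / x + (sSup S - 1)) := by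
            have e1 : 0 ≤ 1 / ε ^ (α - 1) * (((n:ℝ) - 1) / x) :=
              mul_nonneg (by positivity) hn1x
            have e2 : 0 ≤ K * μ * (sSup S - 1) :=
              mul_nonneg (by positivity) hφ0
            linarith
end
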